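/- Under the perspective projection of the positive x-axis onto the positive y-axis through the focal point (1/(1−r), r/(r−1)) with r > 0, r ≠ 1, the point (Σ_{i=0}^n r^i, 0) maps to the point (0, Σ_{i=0}^n r^{-i}) for every n ≥ 0. -/

import Mathlib

/-- The line through the focal point `(1/(1−r), r/(r−1))` and the point `(∑_{i=0}^n r^i, 0)`
on the x-axis meets the y-axis at `(0, ∑_{i=0}^n r^{-i})`: the three points are collinear. -/
theorem geometric_series_perspective_projection (r : ℝ) (hr : 0 < r) (hr1 : r ≠ 1) (n : ℕ) :
    Collinear ℝ
      ({(1 / (1 - r), r / (r - 1)),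
        (∑ i ∈ Finset.range (n + 1), r ^ i, 0),
        (0, ∑ i ∈ Finset.range (n + 1), r⁻¹ ^ i)} : Set (ℝ × ℝ)) := by
  have hr0 : r ≠ 0 := ne_of_gt hr
  have hr1' : r - 1 ≠ 0 := sub_ne_zero.mpr hr1
  have hinv1 : r⁻¹ ≠ 1 := by
    intro h
    exact hr1 (by field_simp at h; linarith)
  rw [geom_sum_eq hr1, geom_sum_eq hinv1]
  rw [collinear_iff_of_mem (Set.mem_insert _ _)]
  refine ⟨((r ^ (n+1) - 1)/(r-1) - 1/(1-r), -(r/(r-1))), ?_⟩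
  rintro p hp
  simp only [Set.mem_insert_iff, Set.mem_singleton_iff] at hp
  rcases hp with rfl | rfl | rfl
  · exact ⟨0, by simp⟩
  · exact ⟨1, by simp [Prod.ext_iff]⟩
  · refine ⟨r⁻¹ ^ (n+1), ?_⟩
    have h1r : (1:ℝ) - r ≠ 0 := by intro h; exact hr1 (by linarith)
    have hinv1' : r⁻¹ - 1 ≠ 0 := sub_ne_zero.mpr hinv1
    simp only [Prod.ext_iff, Prod.smul_mk, vadd_eq_add, Prod.mk_add_mk, smul_eq_mul,
      Prod.fst_add, Prod.snd_add, Prod.smul_fst, Prod.smul_snd]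
    constructor
    · field_simp
      have hk : r ^ n * r⁻¹ ^ n = 1 := by rw [← mul_pow, mul_inv_cancel₀ hr0, one_pow]
      have hi : r * r⁻¹ = 1 := mul_inv_cancel₀ hr0
      linear_combination (-(r - r ^ 2) * r⁻¹) * hk + (r - 1) * hi
    · field_simp
      ring
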